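/- With the definitions of the previous statement (loads, costs, and Rosenthal potential Φ), for every action profile a: Φ(a) ≤ ∑_{e ∈ E} ∑_j ξ_{e,j}·(l_e^a)^{α_j} ≤ ⌈α_max⌉·Φ(a), where α_max = max_j α_j. -/

import Mathlib

/-- The load of resource `e` under action profile `b`. -/
def bgndLoad {E : Type*} [Fintype E] [DecidableEq E] {N : ℕ}
    (b : Fin N → Finset E) (e : E) : ℕ :=
  (Finset.univ.filter fun i => e ∈ b i).card

/-- The Rosenthal potential. -/
noncomputable def bgndPotential {E : Type*} [Fintype E] [DecidableEq E] {N q : ℕ}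
    (α : Fin q → ℝ) (ξ : E → Fin q → ℝ) (b : Fin N → Finset E) : ℝ :=
  ∑ e, ∑ l ∈ Finset.Icc 1 (bgndLoad b e), ∑ j, ξ e j * (l : ℝ) ^ (α j - 1)

lemma bern_aux {p x : ℝ} (hp : 1 ≤ p) (hx : 1 ≤ x) :
    x ^ p - p * x ^ (p - 1) ≤ (x - 1) ^ p := by
  have hx0 : (0:ℝ) < x := by linarith
  have hs : (-1 : ℝ) ≤ -(1/x) := by
    have : 1/x ≤ 1 := by
      rw [div_le_one hx0]; exact hx
    linarith
  have key := one_add_mul_self_le_rpow_one_add hs hp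
  have h1 : (1 : ℝ) + -(1/x) = (x - 1) / x := by field_simp; ring
  rw [h1] at key
  have hxm : (0:ℝ) ≤ x - 1 := by linarith
  rw [Real.div_rpow hxm hx0.le] at key
  -- key : 1 + p * -(1/x) ≤ (x-1)^p / x^p
  have hxp : (0:ℝ) < x ^ p := Real.rpow_pos_of_pos hx0 p
  have key2 : (1 + p * -(1/x)) * x ^ p ≤ (x - 1) ^ p := by
    rw [← le_div_iff₀ hxp]; exact key
  calc x ^ p - p * x ^ (p - 1)
      = (1 + p * -(1/x)) * x ^ p := by
        rw [Real.rpow_sub hx0, Real.rpow_one]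
        field_simp
        ring
    _ ≤ (x - 1) ^ p := key2

lemma sum_pow_le {p : ℝ} (hp : 1 ≤ p) (L : ℕ) :
    ∑ l ∈ Finset.Icc 1 L, (l : ℝ) ^ (p - 1) ≤ (L : ℝ) ^ p := by
  rcases Nat.eq_zero_or_pos L with rfl | hL
  · simp; positivity
  have hL0 : (0:ℝ) < L := by exact_mod_cast hL
  calc ∑ l ∈ Finset.Icc 1 L, (l : ℝ) ^ (p - 1)
      ≤ ∑ l ∈ Finset.Icc 1 L, (L : ℝ) ^ (p - 1) := by
        apply Finset.sum_le_sum
        intro l hl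
        simp only [Finset.mem_Icc] at hl
        exact Real.rpow_le_rpow (by positivity) (by exact_mod_cast hl.2) (by linarith)
    _ = (L : ℝ) * (L : ℝ) ^ (p - 1) := by
        rw [Finset.sum_const, Nat.card_Icc]; simp
    _ = (L : ℝ) ^ p := by
        rw [← Real.rpow_one_add' hL0.le (by linarith)]
        ring_nf

lemma le_c_mul_sum {p c : ℝ} (hp : 1 ≤ p) (hc : p ≤ c) (L : ℕ) :
    (L : ℝ) ^ p ≤ c * ∑ l ∈ Finset.Icc 1 L, (l : ℝ) ^ (p - 1) := by
  induction L with
  | zero => simp [Real.zero_rpow (by linarith : p ≠ 0)]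
  | succ L ih =>
    have hx : (1:ℝ) ≤ (L + 1 : ℕ) := by exact_mod_cast Nat.succ_le_succ (Nat.zero_le L)
    have hb := bern_aux hp hx
    have hcast : ((L + 1 : ℕ) : ℝ) - 1 = (L : ℝ) := by push_cast; ring
    rw [hcast] at hb
    have hsum : ∑ l ∈ Finset.Icc 1 (L+1), (l : ℝ) ^ (p - 1)
        = (∑ l ∈ Finset.Icc 1 L, (l : ℝ) ^ (p - 1)) + ((L+1 : ℕ) : ℝ) ^ (p - 1) := by
      rw [Finset.sum_Icc_succ_top (Nat.one_le_iff_ne_zero.mpr (Nat.succ_ne_zero L))]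
    have hnn : (0:ℝ) ≤ ((L+1 : ℕ) : ℝ) ^ (p - 1) := Real.rpow_nonneg (by positivity) _
    have : ((L + 1 : ℕ) : ℝ) ^ p ≤ (L : ℝ) ^ p + c * ((L+1 : ℕ) : ℝ) ^ (p - 1) := by
      nlinarith
    rw [hsum, mul_add]
    linarith

theorem stmt18 {E : Type*} [Fintype E] [DecidableEq E] {N q : ℕ}
    (α : Fin q → ℝ) (hα : ∀ j, 1 ≤ α j)
    (ξ : E → Fin q → ℝ) (hξ : ∀ e j, 0 < ξ e j)
    (αmax : ℝ) (hub : ∀ j, α j ≤ αmax) (hmem : ∃ j, α j = αmax)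
    (a : Fin N → Finset E) :
    bgndPotential α ξ a ≤ ∑ e, ∑ j, ξ e j * (bgndLoad a e : ℝ) ^ (α j) ∧
    ∑ e, ∑ j, ξ e j * (bgndLoad a e : ℝ) ^ (α j)
      ≤ ((⌈αmax⌉ : ℤ) : ℝ) * bgndPotential α ξ a := by
  set c : ℝ := ((⌈αmax⌉ : ℤ) : ℝ) with hc
  have hcα : ∀ j, α j ≤ c := fun j => (hub j).trans (Int.le_ceil αmax)
  have hpot : bgndPotential α ξ a
      = ∑ e, ∑ j, ξ e j * ∑ l ∈ Finset.Icc 1 (bgndLoad a e), (l : ℝ) ^ (α j - 1) := by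
    unfold bgndPotential
    refine Finset.sum_congr rfl fun e _ => ?_
    rw [Finset.sum_comm]
    exact Finset.sum_congr rfl fun j _ => (Finset.mul_sum _ _ _).symm
  constructor
  · rw [hpot]
    refine Finset.sum_le_sum fun e _ => Finset.sum_le_sum fun j _ => ?_
    exact mul_le_mul_of_nonneg_left (sum_pow_le (hα j) _) (hξ e j).le
  · rw [hpot, Finset.mul_sum]
    refine Finset.sum_le_sum fun e _ => ?_
    rw [Finset.mul_sum]
    refine Finset.sum_le_sum fun j _ => ?_
    calc ξ e j * (bgndLoad a e : ℝ) ^ (α j)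
        ≤ ξ e j * (c * ∑ l ∈ Finset.Icc 1 (bgndLoad a e), (l : ℝ) ^ (α j - 1)) :=
          mul_le_mul_of_nonneg_left (le_c_mul_sum (hα j) (hcα j) _) (hξ e j).le
      _ = c * (ξ e j * ∑ l ∈ Finset.Icc 1 (bgndLoad a e), (l : ℝ) ^ (α j - 1)) := by ring
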